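/- arXiv:1404.2969 — 6 statements merged into one kernel-verified Lean document; each statement's English description precedes it below -/
import Mathlib

section
/- Let f : ℝ → ℝ be C³ with f(0) = f'(0) = 0 and f''(0) > 0. For small h > 0 let s(h) < 0 < t(h) solve f(x) = h near 0 and let S(h) = ∫_{s(h)}^{t(h)} (h - f(x)) dx be the area between the chord y = h and the curve. Then S(h)/(h^{3/2}) → (4√2)/(3√(f''(0))) as h → 0⁺. -/
open Real Filter Set MeasureTheory Topology


lemma nonneg_of_deriv2 {g : ℝ → ℝ} (hd1 : Differentiable ℝ g) (hd2 : Differentiable ℝ (deriv g))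
    {r : ℝ} (h0 : g 0 = 0) (h1 : deriv g 0 = 0)
    (h2 : ∀ x ∈ Icc (-r) r, 0 ≤ deriv (deriv g) x) :
    ∀ x ∈ Icc (-r) r, 0 ≤ g x := by
  intro x hx
  have hr0 : (0:ℝ) ≤ r := by linarith [hx.1, hx.2]
  have hmono : MonotoneOn (deriv g) (Icc (-r) r) :=
    monotoneOn_of_deriv_nonneg (convex_Icc _ _) hd2.continuous.continuousOn
      hd2.differentiableOn (fun y hy => h2 y (interior_subset hy))
  have h0mem : (0:ℝ) ∈ Icc (-r) r := ⟨by linarith, hr0⟩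
  rcases le_total x 0 with hx0 | hx0
  · -- g antitone on [-r, 0]
    have : AntitoneOn g (Icc (-r) 0) := by
      apply antitoneOn_of_deriv_nonpos (convex_Icc _ _) hd1.continuous.continuousOn
        hd1.differentiableOn
      intro y hy
      have hy' : y ∈ Icc (-r) r := Icc_subset_Icc le_rfl hr0 (interior_subset hy)
      have := hmono hy' h0mem (interior_subset hy).2
      rwa [h1] at this
    have := this ⟨hx.1, hx0⟩ ⟨neg_nonpos.2 hr0, le_rfl⟩ hx0
    rwa [h0] at this
  · have : MonotoneOn g (Icc 0 r) := by
      apply monotoneOn_of_deriv_nonneg (convex_Icc _ _) hd1.continuous.continuousOn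
        hd1.differentiableOn
      intro y hy
      have hy' : y ∈ Icc (-r) r := Icc_subset_Icc (by linarith) le_rfl (interior_subset hy)
      have := hmono h0mem hy' (interior_subset hy).1
      rwa [h1] at this
    have := this ⟨le_rfl, hr0⟩ ⟨hx0, hx.2⟩ hx0
    rwa [h0] at this


lemma quad_integral (a h : ℝ) (ha : 0 < a) (hh : 0 ≤ h) :
    ∫ x in (-(sqrt h/sqrt a))..(sqrt h/sqrt a), (h - a*x^2) = 4/3*h*sqrt h/sqrt a := by
  have hsa : (0:ℝ) < sqrt a := sqrt_pos.2 ha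
  have h2 : sqrt h ^ 2 = h := sq_sqrt hh
  have h2a : sqrt a ^ 2 = a := sq_sqrt ha.le
  rw [intervalIntegral.integral_sub intervalIntegrable_const (by apply Continuous.intervalIntegrable; fun_prop),
    intervalIntegral.integral_const, intervalIntegral.integral_const_mul, integral_pow]
  field_simp
  ring_nf
  have h4 : Real.sqrt a^4 = a^2 := by rw [show (4:ℕ) = 2*2 from rfl, pow_mul, h2a]
  have h3 : Real.sqrt h^3 = h*Real.sqrt h := by rw [pow_succ, h2]
  have hi : Real.sqrt a * (Real.sqrt a)⁻¹ = 1 := mul_inv_cancel₀ hsa.ne'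
  have hi2 : (Real.sqrt a)⁻¹^2 * a = 1 := by rw [inv_pow, h2a, inv_mul_cancel₀ ha.ne']
  linear_combination 18*h*Real.sqrt h*hi - 6*Real.sqrt h^3*((Real.sqrt a)⁻¹^2*a)*hi - 6*Real.sqrt h^3*hi2 - 6*h3

lemma core_bound (f : ℝ → ℝ) (hc : Continuous f) (a b r : ℝ) (ha : 0 < a) (hab : a ≤ b)
    (hfa : ∀ x ∈ Icc (-r) r, a*x^2 ≤ f x) (hfb : ∀ x ∈ Icc (-r) r, f x ≤ b*x^2)
    (hconv : ConvexOn ℝ (Icc (-r) r) f)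
    {h s t : ℝ} (hh : 0 < h) (hs : s ∈ Icc (-r) (0:ℝ)) (ht : t ∈ Icc (0:ℝ) r)
    (hs0 : s < 0) (ht0 : 0 < t) (hfs : f s = h) (hft : f t = h) :
    4/3*h*sqrt h/sqrt b ≤ (∫ x in s..t, (h - f x)) ∧
      (∫ x in s..t, (h - f x)) ≤ 4/3*h*sqrt h/sqrt a := by
  have hb : 0 < b := lt_of_lt_of_le ha hab
  have hsa : (0:ℝ) < sqrt a := sqrt_pos.2 ha
  have hsb : (0:ℝ) < sqrt b := sqrt_pos.2 hb
  have hsh : (0:ℝ) < sqrt h := sqrt_pos.2 hh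
  set A := sqrt h / sqrt a with hA
  set B := sqrt h / sqrt b with hB
  have hA0 : 0 < A := div_pos hsh hsa
  have hB0 : 0 < B := div_pos hsh hsb
  have hA2 : A^2 = h / a := by rw [hA, div_pow, sq_sqrt hh.le, sq_sqrt ha.le]
  have hB2 : B^2 = h / b := by rw [hB, div_pow, sq_sqrt hh.le, sq_sqrt hb.le]
  have hst' : s ≤ t := hs.2.trans ht.1
  have hsubr : Icc s t ⊆ Icc (-r) r := Icc_subset_Icc hs.1 ht.2
  have hsmem : s ∈ Icc (-r) r := ⟨hs.1, hst'.trans ht.2⟩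
  have htmem : t ∈ Icc (-r) r := ⟨hs.1.trans hst', ht.2⟩
  -- t ≤ A
  have ht2 : t^2 ≤ h / a := by
    have := hfa t htmem
    rw [hft] at this
    rw [le_div_iff₀ ha]; linarith
  have htA : t ≤ A := by
    nlinarith [hA2]
  -- -A ≤ s
  have hs2 : s^2 ≤ h / a := by
    have := hfa s hsmem
    rw [hfs] at this
    rw [le_div_iff₀ ha]; linarith
  have hsA : -A ≤ s := by nlinarith [hA2]
  -- B ≤ t
  have htB : B ≤ t := by
    have := hfb t htmem
    rw [hft] at this
    have h2 : h / b ≤ t^2 := by rw [div_le_iff₀ hb]; linarith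
    nlinarith [hB2]
  have hsB : s ≤ -B := by
    have := hfb s hsmem
    rw [hfs] at this
    have h2 : h / b ≤ s^2 := by rw [div_le_iff₀ hb]; linarith
    nlinarith [hB2]
  have hBr : Icc (-B) B ⊆ Icc (-r) r := Icc_subset_Icc (le_trans hs.1 hsB) (htB.trans ht.2)
  -- nonneg of h - f on Icc s t via convexity
  have hfle : ∀ x ∈ Icc s t, f x ≤ h := by
    intro x hx
    have hseg : x ∈ segment ℝ s t := by rwa [segment_eq_Icc hst']
    have := hconv.le_on_segment hsmem htmem hseg
    rw [hfs, hft, max_self] at this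
    exact this
  have hint1 : IntervalIntegrable (fun x => h - f x) volume s t :=
    ((continuous_const.sub hc)).intervalIntegrable _ _
  constructor
  · -- lower bound
    have e1 : (∫ x in (-B)..B, (h - b*x^2)) = 4/3*h*sqrt h/sqrt b := quad_integral b h hb hh.le
    have e2 : (∫ x in (-B)..B, (h - b*x^2)) ≤ ∫ x in (-B)..B, (h - f x) := by
      apply intervalIntegral.integral_mono_on (by linarith)
        ((continuous_const.sub (by fun_prop)).intervalIntegrable _ _)
        (((continuous_const.sub hc)).intervalIntegrable _ _)
      intro x hx
      have := hfb x (hBr hx)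
      simp only [Pi.sub_apply]
      linarith
    have e3 : (∫ x in (-B)..B, (h - f x)) ≤ ∫ x in s..t, (h - f x) := by
      apply intervalIntegral.integral_mono_interval (le_trans hsB (by linarith)) (by linarith) htB
      · refine (ae_restrict_iff' measurableSet_Ioc).2 (Eventually.of_forall ?_)
        intro x hx
        show (0:ℝ) ≤ h - f x
        have := hfle x ⟨hx.1.le, hx.2⟩
        linarith
      · exact hint1
    linarith
  · have e1 : (∫ x in (-A)..A, (h - a*x^2)) = 4/3*h*sqrt h/sqrt a := quad_integral a h ha hh.le
    have e2 : (∫ x in s..t, (h - f x)) ≤ ∫ x in s..t, (h - a*x^2) := by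
      apply intervalIntegral.integral_mono_on hst' hint1
        ((continuous_const.sub (by fun_prop)).intervalIntegrable _ _)
      intro x hx
      have := hfa x (hsubr hx)
      simp only [Pi.sub_apply]
      linarith
    have e3 : (∫ x in s..t, (h - a*x^2)) ≤ ∫ x in (-A)..A, (h - a*x^2) := by
      apply intervalIntegral.integral_mono_interval hsA hst' htA
      · refine (ae_restrict_iff' measurableSet_Ioc).2 (Eventually.of_forall ?_)
        intro x hx
        show (0:ℝ) ≤ h - a*x^2
        have hx2 : x^2 ≤ A^2 := by nlinarith [hx.1, hx.2]
        rw [hA2] at hx2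
        have : a * x^2 ≤ h := by
          rw [← le_div_iff₀' ha]; linarith
        linarith
      · exact (continuous_const.sub (by fun_prop)).intervalIntegrable _ _
    linarith

lemma deriv_sub_quad (f : ℝ → ℝ) (hd1 : Differentiable ℝ f) (a : ℝ) :
    deriv (fun x => f x - a*x^2) = fun x => deriv f x - 2*a*x := by
  ext x
  rw [deriv_fun_sub (hd1 x) (by fun_prop)]
  simp [mul_comm]
  ring

lemma key (f : ℝ → ℝ) (hd1 : Differentiable ℝ f) (hd2 : Differentiable ℝ (deriv f))
    (hc2 : Continuous (deriv (deriv f)))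
    (h0 : f 0 = 0) (h1 : deriv f 0 = 0) (k : ℝ) (hk : deriv (deriv f) 0 = k)
    (ε : ℝ) (hε : 0 < ε) (s t : ℝ → ℝ)
    (hst : ∀ h ∈ Ioo 0 ε, s h < 0 ∧ 0 < t h ∧ f (s h) = h ∧ f (t h) = h)
    (hs0 : Tendsto s (nhdsWithin 0 (Ioi 0)) (nhds 0))
    (ht0 : Tendsto t (nhdsWithin 0 (Ioi 0)) (nhds 0))
    {δ : ℝ} (hδ : 0 < δ) (hδk : δ < k) :
    ∀ᶠ h in nhdsWithin 0 (Ioi 0),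
      (∫ x in (s h)..(t h), (h - f x)) / (h * sqrt h) ∈
        Icc (4/3/sqrt ((k+δ)/2)) (4/3/sqrt ((k-δ)/2)) := by
  set a := (k-δ)/2 with ha_def
  set b := (k+δ)/2 with hb_def
  have ha : 0 < a := by simp [ha_def]; linarith
  have hab : a ≤ b := by simp [ha_def, hb_def]; linarith
  -- find r
  have hev : ∀ᶠ x in 𝓝 (0:ℝ), deriv (deriv f) x ∈ Ioo (k-δ) (k+δ) := by
    apply hc2.continuousAt.eventually_mem
    rw [hk]
    exact Ioo_mem_nhds (by linarith) (by linarith)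
  obtain ⟨r', hr', hball⟩ := Metric.eventually_nhds_iff_ball.1 hev
  set r := r'/2 with hr_def
  have hr : 0 < r := by positivity
  have hIccball : ∀ x ∈ Icc (-r) r, deriv (deriv f) x ∈ Ioo (k-δ) (k+δ) := by
    intro x hx
    apply hball
    rw [Metric.mem_ball, Real.dist_eq, sub_zero]
    have : |x| ≤ r := abs_le.2 hx
    linarith
  -- quadratic lower bound
  have hfa : ∀ x ∈ Icc (-r) r, a*x^2 ≤ f x := by
    have hg1 : Differentiable ℝ (fun x => f x - a*x^2) := hd1.sub (by fun_prop)
    have hgd : deriv (fun x => f x - a*x^2) = fun x => deriv f x - 2*a*x :=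
      deriv_sub_quad f hd1 a
    have hg2 : Differentiable ℝ (deriv (fun x => f x - a*x^2)) := by
      rw [hgd]; exact hd2.sub (by fun_prop)
    have hgdd : ∀ x ∈ Icc (-r) r, 0 ≤ deriv (deriv (fun x => f x - a*x^2)) x := by
      intro x hx
      rw [hgd, deriv_fun_sub (hd2 x) (by fun_prop)]
      have e : deriv (fun x : ℝ => 2*a*x) x = 2*a := by
        rw [deriv_const_mul _ differentiable_id.differentiableAt]; simp
      rw [e]
      have := (hIccball x hx).1
      linarith [ha_def]
    have := nonneg_of_deriv2 hg1 hg2 (by simp [h0]) (by rw [hgd]; simp [h1]) hgdd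
    intro x hx
    have := this x hx
    simpa [sub_nonneg] using this
  have hfb : ∀ x ∈ Icc (-r) r, f x ≤ b*x^2 := by
    have hg1 : Differentiable ℝ (fun x => b*x^2 - f x) := (by fun_prop : Differentiable ℝ (fun x : ℝ => b*x^2)).sub hd1
    have hgd : deriv (fun x => b*x^2 - f x) = fun x => 2*b*x - deriv f x := by
      ext x
      rw [deriv_fun_sub (by fun_prop) (hd1 x)]
      simp [mul_comm]
      ring
    have hg2 : Differentiable ℝ (deriv (fun x => b*x^2 - f x)) := by
      rw [hgd]; exact (by fun_prop : Differentiable ℝ (fun x : ℝ => 2*b*x)).sub hd2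
    have hgdd : ∀ x ∈ Icc (-r) r, 0 ≤ deriv (deriv (fun x => b*x^2 - f x)) x := by
      intro x hx
      rw [hgd, deriv_fun_sub (by fun_prop) (hd2 x)]
      have e : deriv (fun x : ℝ => 2*b*x) x = 2*b := by
        rw [deriv_const_mul _ differentiable_id.differentiableAt]; simp
      rw [e]
      have := (hIccball x hx).2
      linarith [hb_def]
    have := nonneg_of_deriv2 hg1 hg2 (by simp [h0]) (by rw [hgd]; simp [h1]) hgdd
    intro x hx
    have := this x hx
    simpa [sub_nonneg] using this
  have hconv : ConvexOn ℝ (Icc (-r) r) f := by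
    apply convexOn_of_deriv2_nonneg (convex_Icc _ _) hd1.continuous.continuousOn
      hd1.differentiableOn hd2.differentiableOn
    intro x hx
    have : deriv^[2] f = deriv (deriv f) := by
      rw [show (2:ℕ) = 1+1 from rfl, Function.iterate_succ, Function.iterate_one]
      rfl
    rw [this]
    have := (hIccball x (interior_subset hx)).1
    linarith
  -- eventually facts
  filter_upwards [Ioo_mem_nhdsGT_of_mem (show (0:ℝ) ∈ Ico 0 ε from ⟨le_rfl, hε⟩),
    hs0.eventually (eventually_gt_nhds (show -r < (0:ℝ) by linarith)),
    hs0.eventually (eventually_lt_nhds hr),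
    ht0.eventually (eventually_gt_nhds (show -r < (0:ℝ) by linarith)),
    ht0.eventually (eventually_lt_nhds hr)] with h hh hsr hsr' htr htr'
  obtain ⟨hsneg, htpos, hfs, hft⟩ := hst h hh
  have hcb := core_bound f hd1.continuous a b r ha hab hfa hfb hconv hh.1
    ⟨hsr.le, hsneg.le⟩ ⟨htpos.le, htr'.le⟩ hsneg htpos hfs hft
  have hpos : 0 < h * sqrt h := mul_pos hh.1 (sqrt_pos.2 hh.1)
  have hsb : (0:ℝ) < sqrt b := sqrt_pos.2 (lt_of_lt_of_le ha hab)
  have hsa : (0:ℝ) < sqrt a := sqrt_pos.2 ha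
  have eb : (4/3*h*sqrt h/sqrt b) / (h * sqrt h) = 4/3/sqrt b := by
    rw [div_div, div_eq_div_iff (mul_pos hsb hpos).ne' hsb.ne']; ring
  have ea : (4/3*h*sqrt h/sqrt a) / (h * sqrt h) = 4/3/sqrt a := by
    rw [div_div, div_eq_div_iff (mul_pos hsa hpos).ne' hsa.ne']; ring
  constructor
  · rw [← eb]
    exact (div_le_div_iff_of_pos_right hpos).2 hcb.1
  · rw [← ea]
    exact (div_le_div_iff_of_pos_right hpos).2 hcb.2

theorem stmt2 (f : ℝ → ℝ) (hf : ContDiff ℝ 3 f)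
    (h0 : f 0 = 0) (h1 : deriv f 0 = 0) (h2 : 0 < deriv (deriv f) 0)
    (ε : ℝ) (hε : 0 < ε) (s t : ℝ → ℝ)
    (hst : ∀ h ∈ Ioo 0 ε, s h < 0 ∧ 0 < t h ∧ f (s h) = h ∧ f (t h) = h)
    (hs0 : Tendsto s (nhdsWithin 0 (Ioi 0)) (nhds 0))
    (ht0 : Tendsto t (nhdsWithin 0 (Ioi 0)) (nhds 0)) :
    Tendsto (fun h => (∫ x in (s h)..(t h), (h - f x)) / (h * Real.sqrt h))
      (nhdsWithin 0 (Ioi 0))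
      (nhds (4 * Real.sqrt 2 / (3 * Real.sqrt (deriv (deriv f) 0)))) := by
  have hder : Differentiable ℝ f ∧ Differentiable ℝ (deriv f) ∧ Continuous (deriv (deriv f)) := by
    rw [show (3 : WithTop ℕ∞) = 2 + 1 from rfl, contDiff_succ_iff_deriv] at hf
    obtain ⟨ha1, -, ha2⟩ := hf
    rw [show (2 : WithTop ℕ∞) = 1 + 1 from rfl, contDiff_succ_iff_deriv] at ha2
    obtain ⟨ha2, -, ha3⟩ := ha2
    exact ⟨ha1, ha2, ha3.continuous⟩
  obtain ⟨hd1, hd2, hc2⟩ := hder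
  set k := deriv (deriv f) 0 with hk_def
  have hs2 : (0:ℝ) < Real.sqrt 2 := sqrt_pos.2 (by norm_num)
  have hsk : (0:ℝ) < Real.sqrt k := sqrt_pos.2 h2
  have hL : 4 * Real.sqrt 2 / (3 * Real.sqrt k) = 4/3/Real.sqrt (k/2) := by
    rw [Real.sqrt_div h2.le]
    field_simp
  apply tendsto_order.2
  constructor
  · intro c hc
    rw [hL] at hc
    have hφ : Tendsto (fun δ : ℝ => 4/3/Real.sqrt ((k+δ)/2)) (nhdsWithin 0 (Ioi 0))
        (nhds (4/3/Real.sqrt (k/2))) := by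
      have hcont : ContinuousAt (fun δ : ℝ => 4/3/Real.sqrt ((k+δ)/2)) 0 := by
        apply ContinuousAt.div continuousAt_const
        · exact (Real.continuous_sqrt.comp (by continuity)).continuousAt
        · simp only [add_zero]
          exact ne_of_gt (sqrt_pos.2 (by linarith))
      simpa using hcont.tendsto.mono_left nhdsWithin_le_nhds
    obtain ⟨δ, hδc, hδmem⟩ := ((hφ.eventually (eventually_gt_nhds hc)).and
      (eventually_of_mem (Ioo_mem_nhdsGT_of_mem ⟨le_rfl, h2⟩) (fun x hx => hx))).exists
    filter_upwards [key f hd1 hd2 hc2 h0 h1 k rfl ε hε s t hst hs0 ht0 hδmem.1 hδmem.2]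
      with h hmem
    exact lt_of_lt_of_le hδc hmem.1
  · intro c hc
    rw [hL] at hc
    have hφ : Tendsto (fun δ : ℝ => 4/3/Real.sqrt ((k-δ)/2)) (nhdsWithin 0 (Ioi 0))
        (nhds (4/3/Real.sqrt (k/2))) := by
      have hcont : ContinuousAt (fun δ : ℝ => 4/3/Real.sqrt ((k-δ)/2)) 0 := by
        apply ContinuousAt.div continuousAt_const
        · exact (Real.continuous_sqrt.comp (by continuity)).continuousAt
        · simp only [sub_zero]
          exact ne_of_gt (sqrt_pos.2 (by linarith))
      simpa using hcont.tendsto.mono_left nhdsWithin_le_nhds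
    obtain ⟨δ, hδc, hδmem⟩ := ((hφ.eventually (eventually_lt_nhds hc)).and
      (eventually_of_mem (Ioo_mem_nhdsGT_of_mem ⟨le_rfl, h2⟩) (fun x hx => hx))).exists
    filter_upwards [key f hd1 hd2 hc2 h0 h1 k rfl ε hε s t hst hs0 ht0 hδmem.1 hδmem.2]
      with h hmem
    exact lt_of_le_of_lt hmem.2 hδc
end

section
/- Let f : ℝ → ℝ be C³ with f(0) = f'(0) = 0 and f''(0) > 0. For small h > 0 let s(h) < 0 < t(h) solve f(x) = h near 0. Define ℓ(h) = (t - s) + h·(f'(t) - f'(s))/(f'(s)·f'(t)), the length of the segment cut on the x-axis (the tangent at the origin) by the tangent lines to the graph at (s, h) and (t, h). Then ℓ(h)/√h → √2/√(f''(0)) as h → 0⁺. -/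
open Real Filter Set

set_option maxHeartbeats 2000000 in
theorem stmt3 (f : ℝ → ℝ) (hf : ContDiff ℝ 3 f)
    (h0 : f 0 = 0) (h1 : deriv f 0 = 0) (h2 : 0 < deriv (deriv f) 0)
    (ε : ℝ) (hε : 0 < ε) (s t : ℝ → ℝ)
    (hst : ∀ h ∈ Ioo 0 ε, s h < 0 ∧ 0 < t h ∧ f (s h) = h ∧ f (t h) = h)
    (hs0 : Tendsto s (nhdsWithin 0 (Ioi 0)) (nhds 0))
    (ht0 : Tendsto t (nhdsWithin 0 (Ioi 0)) (nhds 0)) :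
    Tendsto (fun h =>
        ((t h - s h) + h * (deriv f (t h) - deriv f (s h)) / (deriv f (s h) * deriv f (t h)))
          / Real.sqrt h)
      (nhdsWithin 0 (Ioi 0))
      (nhds (Real.sqrt 2 / Real.sqrt (deriv (deriv f) 0))) := by
  set a := deriv (deriv f) 0 with ha_def
  have hdf : Differentiable ℝ f := hf.differentiable (by norm_num)
  have hd2 : ContDiff ℝ 2 (deriv f) :=
    (contDiff_succ_iff_deriv.mp (by norm_num at hf ⊢; exact hf)).2.2
  have hdd : DifferentiableAt ℝ (deriv f) 0 := (hd2.differentiable (by norm_num)) 0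
  -- slope limit for deriv f
  have hA : Tendsto (fun x => deriv f x / x) (nhdsWithin 0 {0}ᶜ) (nhds a) := by
    have h := hasDerivAt_iff_tendsto_slope.mp hdd.hasDerivAt
    refine h.congr fun x => ?_
    simp [slope, h1, div_eq_inv_mul]
  -- second-order limit via L'Hopital
  have hB : Tendsto (fun x => f x / x ^ 2) (nhdsWithin 0 {0}ᶜ) (nhds (a / 2)) := by
    apply HasDerivAt.lhopital_zero_nhdsNE (f' := deriv f) (g' := fun x => 2 * x)
    · exact Eventually.of_forall fun x => (hdf x).hasDerivAt
    · exact Eventually.of_forall fun x => by simpa using (hasDerivAt_pow 2 x)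
    · filter_upwards [self_mem_nhdsWithin] with x hx
      simpa using hx
    · exact tendsto_nhdsWithin_of_tendsto_nhds (by simpa [h0] using (hdf.continuous.tendsto 0))
    · exact tendsto_nhdsWithin_of_tendsto_nhds (by simpa using ((continuous_pow 2).tendsto (0:ℝ)))
    · have h := hA.div_const 2
      refine h.congr fun x => ?_
      rw [div_div]
      ring_nf
  have hev : ∀ᶠ h in nhdsWithin 0 (Ioi 0), h ∈ Ioo 0 ε :=
    Ioo_mem_nhdsGT_of_mem ⟨le_refl 0, hε⟩
  have ht' : Tendsto t (nhdsWithin 0 (Ioi 0)) (nhdsWithin 0 {0}ᶜ) :=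
    tendsto_nhdsWithin_iff.2 ⟨ht0, hev.mono fun h hh => (hst h hh).2.1.ne'⟩
  have hs' : Tendsto s (nhdsWithin 0 (Ioi 0)) (nhdsWithin 0 {0}ᶜ) :=
    tendsto_nhdsWithin_iff.2 ⟨hs0, hev.mono fun h hh => (hst h hh).1.ne⟩
  have ha2 : (a / 2 : ℝ) ≠ 0 := by positivity
  -- (t h)^2 / h → 2/a
  have hT2 : Tendsto (fun h => (t h) ^ 2 / h) (nhdsWithin 0 (Ioi 0)) (nhds (2 / a)) := by
    have htmp : Tendsto (fun h => h / t h ^ 2) (nhdsWithin 0 (Ioi 0)) (nhds (a / 2)) :=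
      Tendsto.congr' (hev.mono fun h hh => by
        simp only [Function.comp_apply]; rw [(hst h hh).2.2.2]) (hB.comp ht')
    simpa [inv_div] using htmp.inv₀ ha2
  have hS2 : Tendsto (fun h => (s h) ^ 2 / h) (nhdsWithin 0 (Ioi 0)) (nhds (2 / a)) := by
    have htmp : Tendsto (fun h => h / s h ^ 2) (nhdsWithin 0 (Ioi 0)) (nhds (a / 2)) :=
      Tendsto.congr' (hev.mono fun h hh => by
        simp only [Function.comp_apply]; rw [(hst h hh).2.2.1]) (hB.comp hs')
    simpa [inv_div] using htmp.inv₀ ha2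
  set c := Real.sqrt (2 / a) with hc_def
  have hcpos : 0 < c := Real.sqrt_pos.2 (by positivity)
  have hc2 : c ^ 2 = 2 / a := Real.sq_sqrt (by positivity)
  -- t h / sqrt h → c
  have hT : Tendsto (fun h => t h / Real.sqrt h) (nhdsWithin 0 (Ioi 0)) (nhds c) := by
    have h := (Real.continuous_sqrt.tendsto (2 / a)).comp hT2
    refine h.congr' (hev.mono fun h hh => ?_)
    rw [Function.comp_apply, Real.sqrt_div (sq_nonneg _), Real.sqrt_sq (hst h hh).2.1.le]
  have hS : Tendsto (fun h => s h / Real.sqrt h) (nhdsWithin 0 (Ioi 0)) (nhds (-c)) := by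
    have h := ((Real.continuous_sqrt.tendsto (2 / a)).comp hS2).neg
    refine h.congr' (hev.mono fun h hh => ?_)
    rw [Function.comp_apply, Real.sqrt_div (sq_nonneg _), Real.sqrt_sq_eq_abs,
      abs_of_neg (hst h hh).1]
    ring
  -- deriv f at t, s divided by sqrt h
  have hDT : Tendsto (fun h => deriv f (t h) / Real.sqrt h) (nhdsWithin 0 (Ioi 0))
      (nhds (a * c)) := by
    have h := (hA.comp ht').mul hT
    refine h.congr' (hev.mono fun h hh => ?_)
    have hne : t h ≠ 0 := (hst h hh).2.1.ne'
    rw [Function.comp_apply, div_mul_div_comm, mul_comm (deriv f (t h)) (t h),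
      mul_div_mul_left _ _ hne]
  have hDS : Tendsto (fun h => deriv f (s h) / Real.sqrt h) (nhdsWithin 0 (Ioi 0))
      (nhds (-(a * c))) := by
    have h := (hA.comp hs').mul hS
    rw [show a * -c = -(a * c) by ring] at h
    refine h.congr' (hev.mono fun h hh => ?_)
    have hne : s h ≠ 0 := (hst h hh).1.ne
    rw [Function.comp_apply, div_mul_div_comm, mul_comm (deriv f (s h)) (s h),
      mul_div_mul_left _ _ hne]
  have hacpos : 0 < a * c := by positivity
  -- eventual nonvanishing of the derivatives
  have hDTne : ∀ᶠ h in nhdsWithin 0 (Ioi 0), deriv f (t h) ≠ 0 := by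
    filter_upwards [hDT.eventually (eventually_gt_nhds (by linarith : (0:ℝ) < a * c))] with h hh
    intro h0'
    rw [h0'] at hh
    simp at hh
  have hDSne : ∀ᶠ h in nhdsWithin 0 (Ioi 0), deriv f (s h) ≠ 0 := by
    filter_upwards [hDS.eventually (eventually_lt_nhds (by linarith : -(a * c) < 0))] with h hh
    intro h0'
    rw [h0'] at hh
    simp at hh
  -- limit of the rewritten expression
  have hmain : Tendsto (fun h => (t h / Real.sqrt h - s h / Real.sqrt h) +
      (deriv f (t h) / Real.sqrt h - deriv f (s h) / Real.sqrt h) /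
        ((deriv f (s h) / Real.sqrt h) * (deriv f (t h) / Real.sqrt h)))
      (nhdsWithin 0 (Ioi 0))
      (nhds ((c - (-c)) + (a * c - (-(a * c))) / ((-(a * c)) * (a * c)))) :=
    (hT.sub hS).add ((hDT.sub hDS).div (hDS.mul hDT) (by nlinarith))
  -- final value simplification
  have hkey : (c - (-c)) + (a * c - (-(a * c))) / ((-(a * c)) * (a * c))
      = Real.sqrt 2 / Real.sqrt a := by
    rw [← Real.sqrt_div (by norm_num : (0:ℝ) ≤ 2) a, ← hc_def]
    have hane : a ≠ 0 := h2.ne'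
    have hcne : c ≠ 0 := hcpos.ne'
    have h2a : a * c ^ 2 = 2 := by rw [hc2]; field_simp
    field_simp
    nlinarith [h2a]
  rw [← hkey]
  refine hmain.congr' (hev.and (hDTne.and hDSne) |>.mono fun h hh => ?_)
  obtain ⟨hh1, hh2, hh3⟩ := hh
  beta_reduce
  have hrpos : 0 < Real.sqrt h := Real.sqrt_pos.2 hh1.1
  set r := Real.sqrt h with hr_def
  set T := t h with hT_def
  set S := s h with hS_def
  set Dt := deriv f T with hDt_def
  set Ds := deriv f S with hDs_def
  have hrm : r * r = h := Real.mul_self_sqrt hh1.1.le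
  rw [← hrm]
  field_simp
end

section
/- Let f : ℝ → ℝ be C¹ and strictly convex near 0 with f(0) = f'(0) = 0, f strictly increasing on (0, ε) and strictly decreasing on (-ε, 0). For small h > 0, let s(h) < 0 < t(h) be the two solutions of f(x) = h, and set L(h) = t(h) - s(h) and ℓ(h) = L(h) - h·(1/f'(t(h)) - 1/f'(s(h))). Then L is differentiable in h (for small h > 0) and ℓ(h) = L(h) - h·L'(h). -/
open Real Filter Set Topology

/-- Auxiliary: a function `g` taking values in an open set `U` on which `f` is injective
(as part of a larger set `I`), with `f (g h) = h`, is differentiable with derivative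
`(deriv f (g h))⁻¹`, by the inverse function theorem. -/
lemma aux_hasDerivAt (f : ℝ → ℝ) (hf : ContDiff ℝ 1 f) {U I : Set ℝ} (hU : IsOpen U)
    (hUI : U ⊆ I) (hinj : Set.InjOn f I) {g : ℝ → ℝ} {δ : ℝ}
    (hg : ∀ h ∈ Ioo 0 δ, g h ∈ U ∧ f (g h) = h) {h : ℝ} (hh : h ∈ Ioo 0 δ)
    (hd : deriv f (g h) ≠ 0) : HasDerivAt g (deriv f (g h))⁻¹ h := by
  set a := g h with ha
  have hfa : f a = h := (hg h hh).2
  have hsd : HasStrictDerivAt f (deriv f a) a := hf.hasStrictDerivAt one_ne_zero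
  have hF := hsd.hasStrictFDerivAt_equiv hd
  set G := hF.localInverse f _ a with hG
  have hGh : G h = a := by
    have := hF.localInverse_apply_image
    rwa [hfa] at this
  have hGd : HasStrictDerivAt G (deriv f a)⁻¹ h := by
    have := hsd.to_localInverse hd
    rwa [hfa] at this
  have hcont : ContinuousAt G h := by
    have := hF.localInverse_continuousAt
    rwa [hfa] at this
  have hright : ∀ᶠ h' in 𝓝 h, f (G h') = h' := by
    have := hF.eventually_right_inverse
    rwa [hfa] at this
  have hGU : ∀ᶠ h' in 𝓝 h, G h' ∈ U := by
    have : U ∈ 𝓝 a := hU.mem_nhds (hg h hh).1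
    have := hcont (by rwa [hGh])
    exact this
  have hIoo : ∀ᶠ h' in 𝓝 h, h' ∈ Ioo 0 δ := isOpen_Ioo.eventually_mem hh
  have heq : g =ᶠ[𝓝 h] G := by
    filter_upwards [hright, hGU, hIoo] with h' h1 h2 h3
    exact hinj (hUI (hg h' h3).1) (hUI h2) (((hg h' h3).2).trans h1.symm)
  exact hGd.hasDerivAt.congr_of_eventuallyEq heq

theorem stmt4 (f : ℝ → ℝ) (hf : ContDiff ℝ 1 f)
    (ε : ℝ) (hε : 0 < ε)
    (hconv : StrictConvexOn ℝ (Ioo (-ε) ε) f)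
    (h0 : f 0 = 0) (h1 : deriv f 0 = 0)
    (hmono : StrictMonoOn f (Ico 0 ε)) (hanti : StrictAntiOn f (Ioc (-ε) 0))
    (δ : ℝ) (hδ : 0 < δ) (s t : ℝ → ℝ)
    (hst : ∀ h ∈ Ioo 0 δ, s h ∈ Ioo (-ε) 0 ∧ t h ∈ Ioo 0 ε ∧ f (s h) = h ∧ f (t h) = h)
    (L ℓ : ℝ → ℝ)
    (hL : ∀ h, L h = t h - s h)
    (hℓ : ∀ h, ℓ h = L h - h * (1 / deriv f (t h) - 1 / deriv f (s h))) :
    ∀ h ∈ Ioo 0 δ, DifferentiableAt ℝ L h ∧ ℓ h = L h - h * deriv L h := by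
  intro h hh
  obtain ⟨hs, ht, hfs, hft⟩ := hst h hh
  have hdiff : Differentiable ℝ f := hf.differentiable one_ne_zero
  have h0mem : (0 : ℝ) ∈ Ioo (-ε) ε := ⟨by linarith, hε⟩
  have htmem : t h ∈ Ioo (-ε) ε := ⟨by linarith [ht.1], ht.2⟩
  have hsmem : s h ∈ Ioo (-ε) ε := ⟨hs.1, by linarith [hs.2]⟩
  -- deriv f (t h) > 0
  have hdt : 0 < deriv f (t h) := by
    have := hconv.slope_lt_deriv h0mem htmem ht.1 (hdiff _)
    rw [slope_def_field] at this
    have hpos : 0 < (f (t h) - f 0) / (t h - 0) := by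
      rw [h0, hft, sub_zero, sub_zero]; exact div_pos hh.1 ht.1
    linarith
  -- deriv f (s h) < 0
  have hds : deriv f (s h) < 0 := by
    have := hconv.deriv_lt_slope hsmem h0mem hs.2 (hdiff _)
    rw [slope_def_field] at this
    have hneg : (f 0 - f (s h)) / (0 - s h) < 0 := by
      rw [h0, hfs]
      apply div_neg_of_neg_of_pos <;> [linarith [hh.1]; linarith [hs.2]]
    linarith
  have ht' : HasDerivAt t (deriv f (t h))⁻¹ h := by
    refine aux_hasDerivAt f hf isOpen_Ioo Ioo_subset_Ico_self hmono.injOn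
      (fun h' hh' => ⟨(hst h' hh').2.1, (hst h' hh').2.2.2⟩) hh hdt.ne'
  have hs' : HasDerivAt s (deriv f (s h))⁻¹ h := by
    refine aux_hasDerivAt f hf isOpen_Ioo Ioo_subset_Ioc_self hanti.injOn
      (fun h' hh' => ⟨(hst h' hh').1, (hst h' hh').2.2.1⟩) hh hds.ne
  have hLeq : L = fun x => t x - s x := funext hL
  have hL' : HasDerivAt L ((deriv f (t h))⁻¹ - (deriv f (s h))⁻¹) h := by
    rw [hLeq]; exact ht'.sub hs'
  refine ⟨hL'.differentiableAt, ?_⟩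
  rw [hℓ, hL'.deriv]
  ring
end

section
/- Let f : I → ℝ be differentiable on an open interval I ⊆ (0, ∞) with f, f' positive, and suppose 2/f'(t) = t/f(t) + a for a constant a. Then there is a constant b such that (t − a·f(t))² = 2b·f(t) for all t ∈ I; i.e., the graph of f lies on the conic x² − 2axy + a²y² − 2by = 0, which is a parabola (for b ≠ 0) or a line. -/
open Real Set

theorem stmt9 (α β : ℝ) (hα : 0 < α) (f : ℝ → ℝ)
    (hf : ∀ t ∈ Ioo α β, DifferentiableAt ℝ f t)
    (hfpos : ∀ t ∈ Ioo α β, 0 < f t) (hfd : ∀ t ∈ Ioo α β, 0 < deriv f t)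
    (a : ℝ) (hode : ∀ t ∈ Ioo α β, 2 / deriv f t = t / f t + a) :
    ∃ b : ℝ, ∀ t ∈ Ioo α β,
      (t - a * f t) ^ 2 = 2 * b * f t ∧
      t ^ 2 - 2 * a * t * f t + a ^ 2 * (f t) ^ 2 - 2 * b * f t = 0 := by
  by_cases hne : (Ioo α β).Nonempty
  · obtain ⟨t₀, ht₀⟩ := hne
    set h : ℝ → ℝ := fun t => (t - a * f t) ^ 2 / f t with hh
    -- h has derivative 0 on the interval
    have key : ∀ x ∈ Ioo α β, HasDerivAt h 0 x := by
      intro x hx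
      have hfx := hfpos x hx
      have hfd' := hfd x hx
      have hd : HasDerivAt f (deriv f x) x := (hf x hx).hasDerivAt
      have h1 : HasDerivAt (fun t => (t - a * f t) ^ 2)
          (2 * (x - a * f x) ^ 1 * (1 - a * deriv f x)) x := by
        exact (((hasDerivAt_id x).sub (hd.const_mul a)).pow 2)
      have h2 := h1.div hd (ne_of_gt hfx)
      -- the derivative value is 0
      have hrel : 2 * f x = deriv f x * (x + a * f x) := by
        have := hode x hx
        field_simp at this
        linarith [this]
      have hval : (2 * (x - a * f x) ^ 1 * (1 - a * deriv f x) * f x -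
          (x - a * f x) ^ 2 * deriv f x) / f x ^ 2 = 0 := by
        have : 2 * (x - a * f x) ^ 1 * (1 - a * deriv f x) * f x -
            (x - a * f x) ^ 2 * deriv f x = 0 := by
          have : 2 * (x - a * f x) ^ 1 * (1 - a * deriv f x) * f x -
              (x - a * f x) ^ 2 * deriv f x
              = (x - a * f x) * (2 * f x - deriv f x * (x + a * f x)) := by ring
          rw [this, ← hrel]
          ring
        rw [this, zero_div]
      rw [hval] at h2
      exact h2
    have hconst : ∀ x ∈ Ioo α β, h x = h t₀ := by
      intro x hx
      apply (convex_Ioo α β).is_const_of_fderivWithin_eq_zero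
        (fun y hy => ((key y hy).differentiableAt).differentiableWithinAt)
        ?_ hx ht₀
      intro y hy
      rw [fderivWithin_of_isOpen isOpen_Ioo hy,
        ((key y hy).hasFDerivAt).fderiv]
      ext z
      simp
    refine ⟨h t₀ / 2, fun t ht => ?_⟩
    have hft := hfpos t ht
    have h1 : (t - a * f t) ^ 2 / f t = h t₀ := hconst t ht
    have h2 : (t - a * f t) ^ 2 = 2 * (h t₀ / 2) * f t := by
      field_simp at h1 ⊢
      linarith [h1]
    exact ⟨h2, by linarith [h2, sq_nonneg (t - a * f t), (by ring :
      t ^ 2 - 2 * a * t * f t + a ^ 2 * (f t) ^ 2 = (t - a * f t) ^ 2)]⟩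
  · exact ⟨0, fun t ht => absurd ⟨t, ht⟩ hne⟩
end

section
/- Let f : ℝ → ℝ be C³ with f(0) = f'(0) = 0 and f''(0) > 0. For small h > 0 let s(h) < 0 < t(h) solve f(x) = h, and let V(h) = (1/2)·(−f'(s)f'(t)/(f'(t) − f'(s)))·(t − s)² be the area of the triangle formed by the chord endpoints and the intersection of the tangents at them. Then V(h)/h^{3/2} → 2√2/√(f''(0)) as h → 0⁺. -/
open Real Filter Set

theorem stmt14 (f : ℝ → ℝ) (hf : ContDiff ℝ 3 f)
    (h0 : f 0 = 0) (h1 : deriv f 0 = 0) (h2 : 0 < deriv (deriv f) 0)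
    (ε : ℝ) (hε : 0 < ε) (s t : ℝ → ℝ)
    (hst : ∀ h ∈ Ioo 0 ε, s h < 0 ∧ 0 < t h ∧ f (s h) = h ∧ f (t h) = h)
    (hs0 : Tendsto s (nhdsWithin 0 (Ioi 0)) (nhds 0))
    (ht0 : Tendsto t (nhdsWithin 0 (Ioi 0)) (nhds 0))
    (V : ℝ → ℝ)
    (hV : ∀ h, V h = (1 / 2) * (-(deriv f (s h) * deriv f (t h))
        / (deriv f (t h) - deriv f (s h))) * (t h - s h) ^ 2) :
    Tendsto (fun h => V h / (h * Real.sqrt h)) (nhdsWithin 0 (Ioi 0))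
      (nhds (2 * Real.sqrt 2 / Real.sqrt (deriv (deriv f) 0))) := by
  set c := deriv (deriv f) 0 with hcdef
  have hc0 : 0 < c := h2
  set r := Real.sqrt (2 / c) with hrdef
  have hr0 : 0 < r := Real.sqrt_pos.mpr (by positivity)
  have hr2 : r ^ 2 = 2 / c := Real.sq_sqrt (by positivity)
  -- smoothness facts
  have hdf : ContDiff ℝ 2 (deriv f) :=
    (contDiff_succ_iff_deriv.mp (by norm_num at hf ⊢; exact hf)).2.2
  have hfdiff : Differentiable ℝ f := hf.differentiable (by norm_num)
  -- L1 : f'(x)/x → c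
  have L1 : Tendsto (fun x => deriv f x / x) (nhdsWithin 0 {(0:ℝ)}ᶜ) (nhds c) := by
    have hD : HasDerivAt (deriv f) c 0 := ((hdf.differentiable (by norm_num)) 0).hasDerivAt
    have := hasDerivAt_iff_tendsto_slope.mp hD
    simpa [slope_fun_def, h1, div_eq_inv_mul] using this
  -- L2 : f(x)/x² → c/2
  have L2 : Tendsto (fun x => f x / x ^ 2) (nhdsWithin 0 {(0:ℝ)}ᶜ) (nhds (c / 2)) := by
    apply deriv.lhopital_zero_nhdsNE (f := f) (g := fun x : ℝ => x ^ 2) (a := 0)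
    · exact Eventually.of_forall fun x => hfdiff x
    · filter_upwards [self_mem_nhdsWithin] with x hx
      have : deriv (fun x : ℝ => x ^ 2) x = 2 * x := by
        simp [deriv_pow_field]
      rw [this]
      simp only [mem_compl_iff, mem_singleton_iff] at hx
      positivity
    · have : Tendsto f (nhds 0) (nhds (f 0)) := (hfdiff.continuous.tendsto 0)
      rw [h0] at this
      exact this.mono_left nhdsWithin_le_nhds
    · have : Tendsto (fun x : ℝ => x ^ 2) (nhds 0) (nhds 0) := by
        simpa using (continuous_pow 2).tendsto (0:ℝ)
      exact this.mono_left nhdsWithin_le_nhds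
    · have heq : (fun x : ℝ => deriv f x / deriv (fun y : ℝ => y ^ 2) x)
          = fun x : ℝ => (deriv f x / x) / 2 := by
        funext x
        have : deriv (fun y : ℝ => y ^ 2) x = 2 * x := by simp [deriv_pow_field]
        rw [this, div_div, mul_comm]
      rw [heq]
      exact L1.div_const 2
  -- basic filter facts
  have hmem : Ioo (0:ℝ) ε ∈ nhdsWithin (0:ℝ) (Ioi 0) :=
    Ioo_mem_nhdsGT_of_mem ⟨le_refl 0, hε⟩
  have hsne : ∀ᶠ h in nhdsWithin (0:ℝ) (Ioi 0), s h ∈ ({(0:ℝ)}ᶜ : Set ℝ) := by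
    filter_upwards [hmem] with h hh
    exact Set.mem_compl_singleton_iff.mpr (ne_of_lt (hst h hh).1)
  have htne : ∀ᶠ h in nhdsWithin (0:ℝ) (Ioi 0), t h ∈ ({(0:ℝ)}ᶜ : Set ℝ) := by
    filter_upwards [hmem] with h hh
    exact Set.mem_compl_singleton_iff.mpr (ne_of_gt (hst h hh).2.1)
  have hs' : Tendsto s (nhdsWithin 0 (Ioi 0)) (nhdsWithin 0 {(0:ℝ)}ᶜ) :=
    tendsto_nhdsWithin_iff.mpr ⟨hs0, hsne⟩
  have ht' : Tendsto t (nhdsWithin 0 (Ioi 0)) (nhdsWithin 0 {(0:ℝ)}ᶜ) :=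
    tendsto_nhdsWithin_iff.mpr ⟨ht0, htne⟩
  -- slopes
  have hp : Tendsto (fun h => deriv f (s h) / s h) (nhdsWithin 0 (Ioi 0)) (nhds c) := L1.comp hs'
  have hq : Tendsto (fun h => deriv f (t h) / t h) (nhdsWithin 0 (Ioi 0)) (nhds c) := L1.comp ht'
  -- h/(s h)^2 → c/2
  have hfs : Tendsto (fun h => h / (s h) ^ 2) (nhdsWithin 0 (Ioi 0)) (nhds (c / 2)) := by
    apply (L2.comp hs').congr'
    filter_upwards [hmem] with h hh
    simp only [Function.comp_apply, (hst h hh).2.2.1]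
  have hft : Tendsto (fun h => h / (t h) ^ 2) (nhdsWithin 0 (Ioi 0)) (nhds (c / 2)) := by
    apply (L2.comp ht').congr'
    filter_upwards [hmem] with h hh
    simp only [Function.comp_apply, (hst h hh).2.2.2]
  -- (s h)^2/h → 2/c
  have hsq : Tendsto (fun h => (s h) ^ 2 / h) (nhdsWithin 0 (Ioi 0)) (nhds (2 / c)) := by
    have := hfs.inv₀ (by positivity)
    simpa [inv_div] using this
  have htq : Tendsto (fun h => (t h) ^ 2 / h) (nhdsWithin 0 (Ioi 0)) (nhds (2 / c)) := by
    have := hft.inv₀ (by positivity)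
    simpa [inv_div] using this
  -- s h / √h → -r, t h / √h → r
  have ha : Tendsto (fun h => s h / Real.sqrt h) (nhdsWithin 0 (Ioi 0)) (nhds (-r)) := by
    apply (hsq.sqrt.neg).congr'
    filter_upwards [hmem, self_mem_nhdsWithin] with h hh hpos
    have hs_neg := (hst h hh).1
    rw [Real.sqrt_div (sq_nonneg _), Real.sqrt_sq_eq_abs, abs_of_neg hs_neg]
    ring
  have hb : Tendsto (fun h => t h / Real.sqrt h) (nhdsWithin 0 (Ioi 0)) (nhds r) := by
    apply htq.sqrt.congr'
    filter_upwards [hmem, self_mem_nhdsWithin] with h hh hpos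
    rw [Real.sqrt_div (sq_nonneg _), Real.sqrt_sq_eq_abs, abs_of_pos (hst h hh).2.1]
  -- f'(s h)/√h → c * -r,  f'(t h)/√h → c * r
  have hA : Tendsto (fun h => deriv f (s h) / Real.sqrt h) (nhdsWithin 0 (Ioi 0))
      (nhds (c * -r)) := by
    apply (hp.mul ha).congr'
    filter_upwards [hmem] with h hh
    have hs_ne : s h ≠ 0 := ne_of_lt (hst h hh).1
    field_simp
  have hB : Tendsto (fun h => deriv f (t h) / Real.sqrt h) (nhdsWithin 0 (Ioi 0))
      (nhds (c * r)) := by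
    apply (hq.mul hb).congr'
    filter_upwards [hmem] with h hh
    have ht_ne : t h ≠ 0 := ne_of_gt (hst h hh).2.1
    field_simp
  have hBA : Tendsto (fun h => deriv f (t h) / Real.sqrt h - deriv f (s h) / Real.sqrt h)
      (nhdsWithin 0 (Ioi 0)) (nhds (c * r - c * -r)) := hB.sub hA
  have hC : Tendsto (fun h => (t h / Real.sqrt h - s h / Real.sqrt h) ^ 2)
      (nhdsWithin 0 (Ioi 0)) (nhds ((r - -r) ^ 2)) := (hb.sub ha).pow 2
  have hne : c * r - c * -r ≠ 0 := ne_of_gt (by nlinarith [mul_pos hc0 hr0])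
  have hFinal : Tendsto (fun h => 1 / 2 *
      (-(deriv f (s h) / Real.sqrt h * (deriv f (t h) / Real.sqrt h)) /
        (deriv f (t h) / Real.sqrt h - deriv f (s h) / Real.sqrt h)) *
      (t h / Real.sqrt h - s h / Real.sqrt h) ^ 2)
      (nhdsWithin 0 (Ioi 0))
      (nhds (1 / 2 * (-(c * -r * (c * r)) / (c * r - c * -r)) * (r - -r) ^ 2)) :=
    (((hA.mul hB).neg.div hBA hne).const_mul (1 / 2)).mul hC
  have hL : 1 / 2 * (-(c * -r * (c * r)) / (c * r - c * -r)) * (r - -r) ^ 2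
      = 2 * Real.sqrt 2 / Real.sqrt c := by
    have h2r : 2 * r = 2 * Real.sqrt 2 / Real.sqrt c := by
      rw [hrdef, Real.sqrt_div (by norm_num : (0:ℝ) ≤ 2), mul_div_assoc]
    rw [← h2r]
    have hcr2 : c * r ^ 2 = 2 := by rw [hr2]; field_simp
    have hcr : c * r ≠ 0 := by positivity
    field_simp
    nlinarith [hr2, hr0, hc0]
  rw [← hL]
  apply hFinal.congr'
  filter_upwards [hmem, self_mem_nhdsWithin] with h hh hpos
  have hh0 : (0:ℝ) < h := hpos
  have hu0 : 0 < Real.sqrt h := Real.sqrt_pos.mpr hh0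
  have hu2 : Real.sqrt h ^ 2 = h := Real.sq_sqrt hh0.le
  set u := Real.sqrt h with hu
  rw [hV h]
  set a := s h with hadef
  set b := t h with hbdef
  set X := deriv f a with hXdef
  set Y := deriv f b with hYdef
  simp only [div_sub_div_same]
  by_cases hD : Y - X = 0
  · rw [hD]
    simp
  · rw [show h = u ^ 2 from hu2.symm]
    field_simp
end

section
/- Let f : ℝ → ℝ be C³ with f(0) = f'(0) = 0 and f''(0) > 0. With s(h) < 0 < t(h) solving f(x) = h, L(h) = t − s, ℓ(h) = L(h) + h(f'(t) − f'(s))/(f'(s)f'(t)), and W(h) = (1/2)(L(h) + ℓ(h))h, one has W(h)/h^{3/2} → 3√2/(2√(f''(0))) as h → 0⁺. -/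
open Real Filter Set

private lemma stmt15_alg (x Lh u v : ℝ) (hx : x ≠ 0) (hu : u ≠ 0) (hv : v ≠ 0) :
    (1/2) * (Lh + (Lh + (x*x) * (u - v)/(v*u))) * (x*x) / ((x*x)*x)
      = (1/2)*((Lh/x) + ((Lh/x) + (u/x - v/x)/((v/x)*(u/x)))) := by
  field_simp

private lemma stmt15_val (u w : ℝ) (hu2 : u*u = 2) (hu : u ≠ 0) (hw : w ≠ 0) :
    3*u/(2*w) = 1/2*((u/w - -(u/w)) + ((u/w - -(u/w)) +
      ((w*w)*(u/w) - -((w*w)*(u/w)))/(-((w*w)*(u/w))*((w*w)*(u/w))))) := by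
  have h1 : (w*w)*(u/w) = w*u := by field_simp
  rw [h1]
  field_simp
  linear_combination (-1) * hu2

theorem stmt15 (f : ℝ → ℝ) (hf : ContDiff ℝ 3 f)
    (h0 : f 0 = 0) (h1 : deriv f 0 = 0) (h2 : 0 < deriv (deriv f) 0)
    (ε : ℝ) (hε : 0 < ε) (s t : ℝ → ℝ)
    (hst : ∀ h ∈ Ioo 0 ε, s h < 0 ∧ 0 < t h ∧ f (s h) = h ∧ f (t h) = h)
    (hs0 : Tendsto s (nhdsWithin 0 (Ioi 0)) (nhds 0))
    (ht0 : Tendsto t (nhdsWithin 0 (Ioi 0)) (nhds 0))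
    (L ℓ W : ℝ → ℝ)
    (hL : ∀ h, L h = t h - s h)
    (hℓ : ∀ h, ℓ h = L h + h * (deriv f (t h) - deriv f (s h))
        / (deriv f (s h) * deriv f (t h)))
    (hW : ∀ h, W h = (1 / 2) * (L h + ℓ h) * h) :
    Tendsto (fun h => W h / (h * Real.sqrt h)) (nhdsWithin 0 (Ioi 0))
      (nhds (3 * Real.sqrt 2 / (2 * Real.sqrt (deriv (deriv f) 0)))) := by
  set c := deriv (deriv f) 0 with hc
  have hcne : c ≠ 0 := ne_of_gt h2
  have hdf1 : Differentiable ℝ f := hf.differentiable (by norm_num)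
  have hf' : ContDiff ℝ (2+1) f := by
    have : ((2:WithTop ℕ∞)+1) = 3 := by norm_num
    rw [this]; exact hf
  have hcd' : ContDiff ℝ 2 (deriv f) := (contDiff_succ_iff_deriv.mp hf').2.2
  have hD2 : DifferentiableAt ℝ (deriv f) 0 :=
    (hcd'.differentiable (by norm_num)).differentiableAt
  -- slope limit: deriv f x / x → c
  have hslope : Tendsto (fun x => deriv f x / x) (nhdsWithin 0 {0}ᶜ) (nhds c) := by
    have h := hD2.hasDerivAt
    rw [hasDerivAt_iff_tendsto_slope] at h
    refine h.congr' ?_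
    filter_upwards with x
    simp [slope_fun_def, h1, div_eq_mul_inv, mul_comm]
  -- L'Hopital: f x / x^2 → c/2
  have hQ : Tendsto (fun x => f x / x^2) (nhdsWithin 0 {0}ᶜ) (nhds (c/2)) := by
    apply deriv.lhopital_zero_nhdsNE
    · exact Eventually.of_forall fun x => hdf1.differentiableAt
    · filter_upwards [self_mem_nhdsWithin] with x hx
      have : deriv (fun x : ℝ => x^2) x = 2 * x := by
        simp [deriv_pow_field]
      rw [this]
      exact mul_ne_zero two_ne_zero hx
    · have : Tendsto f (nhds 0) (nhds 0) := by
        have := hdf1.continuous.tendsto 0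
        rwa [h0] at this
      exact this.mono_left nhdsWithin_le_nhds
    · have : Tendsto (fun x : ℝ => x^2) (nhds 0) (nhds 0) := by
        have := (continuous_pow 2).tendsto (0:ℝ)
        simpa using this
      exact this.mono_left nhdsWithin_le_nhds
    · have hdiv : Tendsto (fun x => (deriv f x / x) / 2) (nhdsWithin 0 {0}ᶜ) (nhds (c/2)) :=
        hslope.div_const 2
      refine hdiv.congr' ?_
      filter_upwards [self_mem_nhdsWithin] with x hx
      have : deriv (fun x : ℝ => x^2) x = 2 * x := by
        simp [deriv_pow_field]
      rw [this]
      rw [div_div, mul_comm]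
  -- eventual positivity facts
  have hmem : Ioo (0:ℝ) ε ∈ nhdsWithin (0:ℝ) (Ioi 0) :=
    Ioo_mem_nhdsGT_of_mem ⟨le_refl 0, hε⟩
  have hev : ∀ᶠ h in nhdsWithin (0:ℝ) (Ioi 0),
      s h < 0 ∧ 0 < t h ∧ f (s h) = h ∧ f (t h) = h := by
    filter_upwards [hmem] with h hh
    exact hst h hh
  have ht' : Tendsto t (nhdsWithin 0 (Ioi 0)) (nhdsWithin 0 {0}ᶜ) := by
    refine tendsto_nhdsWithin_of_tendsto_nhds_of_eventually_within _ ht0 ?_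
    filter_upwards [hev] with h hh
    exact hh.2.1.ne'
  have hs' : Tendsto s (nhdsWithin 0 (Ioi 0)) (nhdsWithin 0 {0}ᶜ) := by
    refine tendsto_nhdsWithin_of_tendsto_nhds_of_eventually_within _ hs0 ?_
    filter_upwards [hev] with h hh
    exact hh.1.ne
  set a := Real.sqrt (2/c) with ha
  have hapos : 0 < a := Real.sqrt_pos.mpr (div_pos two_pos h2)
  -- t h ^2 / h → 2/c
  have hT2 : Tendsto (fun h => h / (t h)^2) (nhdsWithin 0 (Ioi 0)) (nhds (c/2)) := by
    refine (hQ.comp ht').congr' ?_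
    filter_upwards [hev] with h hh
    simp [Function.comp, hh.2.2.2]
  have hS2 : Tendsto (fun h => h / (s h)^2) (nhdsWithin 0 (Ioi 0)) (nhds (c/2)) := by
    refine (hQ.comp hs').congr' ?_
    filter_upwards [hev] with h hh
    simp [Function.comp, hh.2.2.1]
  have hc2 : c/2 ≠ 0 := by positivity
  have hT3 : Tendsto (fun h => (t h)^2 / h) (nhdsWithin 0 (Ioi 0)) (nhds (2/c)) := by
    have := hT2.inv₀ hc2
    simp only [inv_div] at this
    exact this
  have hS3 : Tendsto (fun h => (s h)^2 / h) (nhdsWithin 0 (Ioi 0)) (nhds (2/c)) := by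
    have := hS2.inv₀ hc2
    simp only [inv_div] at this
    exact this
  -- t h / √h → a, s h / √h → -a
  have hTa : Tendsto (fun h => t h / Real.sqrt h) (nhdsWithin 0 (Ioi 0)) (nhds a) := by
    have := (Real.continuous_sqrt.tendsto (2/c)).comp hT3
    refine this.congr' ?_
    filter_upwards [hev, self_mem_nhdsWithin] with h hh hpos
    simp only [Function.comp]
    rw [Real.sqrt_div (sq_nonneg _), Real.sqrt_sq hh.2.1.le]
  have hSa : Tendsto (fun h => s h / Real.sqrt h) (nhdsWithin 0 (Ioi 0)) (nhds (-a)) := by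
    have := ((Real.continuous_sqrt.tendsto (2/c)).comp hS3).neg
    refine this.congr' ?_
    filter_upwards [hev, self_mem_nhdsWithin] with h hh hpos
    simp only [Function.comp]
    rw [Real.sqrt_div (sq_nonneg _), Real.sqrt_sq_eq_abs, abs_of_neg hh.1]
    ring
  -- derivative ratios
  have hU : Tendsto (fun h => deriv f (t h) / Real.sqrt h) (nhdsWithin 0 (Ioi 0))
      (nhds (c * a)) := by
    have := (hslope.comp ht').mul hTa
    refine this.congr' ?_
    filter_upwards [hev] with h hh
    simp only [Function.comp]
    rw [div_mul_div_comm, mul_comm (t h) (Real.sqrt h), mul_div_mul_right _ _ hh.2.1.ne']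
  have hV : Tendsto (fun h => deriv f (s h) / Real.sqrt h) (nhdsWithin 0 (Ioi 0))
      (nhds (-(c * a))) := by
    have := (hslope.comp hs').mul hSa
    refine Tendsto.congr' ?_ (by convert this using 2; ring)
    filter_upwards [hev] with h hh
    simp only [Function.comp]
    rw [div_mul_div_comm, mul_comm (s h) (Real.sqrt h), mul_div_mul_right _ _ hh.1.ne]
  have hkne : c * a ≠ 0 := mul_ne_zero hcne hapos.ne'
  have hune : ∀ᶠ h in nhdsWithin (0:ℝ) (Ioi 0), deriv f (t h) ≠ 0 := by
    filter_upwards [hU.eventually_ne hkne] with h hh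
    intro h0'
    exact hh (by simp [h0'])
  have hvne : ∀ᶠ h in nhdsWithin (0:ℝ) (Ioi 0), deriv f (s h) ≠ 0 := by
    filter_upwards [hV.eventually_ne (neg_ne_zero.mpr hkne)] with h hh
    intro h0'
    exact hh (by simp [h0'])
  -- the big limit
  have hden : (-(c*a)) * (c*a) ≠ 0 := mul_ne_zero (neg_ne_zero.mpr hkne) hkne
  have main : Tendsto (fun h => (1/2)*(((t h / Real.sqrt h) - (s h / Real.sqrt h)) +
      (((t h / Real.sqrt h) - (s h / Real.sqrt h)) +
        ((deriv f (t h) / Real.sqrt h) - (deriv f (s h) / Real.sqrt h)) /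
          ((deriv f (s h) / Real.sqrt h) * (deriv f (t h) / Real.sqrt h)))))
      (nhdsWithin 0 (Ioi 0))
      (nhds ((1/2)*((a - -a) + ((a - -a) + (c*a - -(c*a))/((-(c*a))*(c*a)))))) :=
    (((hTa.sub hSa).add ((hTa.sub hSa).add ((hU.sub hV).div (hV.mul hU) hden))).const_mul (1/2))
  have heq : (fun h => W h / (h * Real.sqrt h)) =ᶠ[nhdsWithin (0:ℝ) (Ioi 0)]
      (fun h => (1/2)*(((t h / Real.sqrt h) - (s h / Real.sqrt h)) +
      (((t h / Real.sqrt h) - (s h / Real.sqrt h)) +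
        ((deriv f (t h) / Real.sqrt h) - (deriv f (s h) / Real.sqrt h)) /
          ((deriv f (s h) / Real.sqrt h) * (deriv f (t h) / Real.sqrt h))))) := by
    filter_upwards [hev, hune, hvne, self_mem_nhdsWithin] with h hh hu hv hpos
    have hxpos : 0 < Real.sqrt h := Real.sqrt_pos.mpr hpos
    have hx : Real.sqrt h * Real.sqrt h = h := Real.mul_self_sqrt hpos.le
    have := stmt15_alg (Real.sqrt h) (L h) (deriv f (t h)) (deriv f (s h))
      hxpos.ne' hu hv
    calc W h / (h * Real.sqrt h)
        = (1/2) * (L h + (L h + (Real.sqrt h * Real.sqrt h) *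
            (deriv f (t h) - deriv f (s h)) / (deriv f (s h) * deriv f (t h)))) *
            (Real.sqrt h * Real.sqrt h) / ((Real.sqrt h * Real.sqrt h) * Real.sqrt h) := by
          rw [hW, hℓ, hx]
      _ = (1/2)*((L h / Real.sqrt h) + ((L h / Real.sqrt h) +
            ((deriv f (t h) / Real.sqrt h) - (deriv f (s h) / Real.sqrt h)) /
              ((deriv f (s h) / Real.sqrt h) * (deriv f (t h) / Real.sqrt h)))) := this
      _ = _ := by rw [hL, sub_div]
  have final := main.congr' heq.symm
  convert final using 2
  -- value computation
  have hs2 : Real.sqrt 2 * Real.sqrt 2 = 2 := Real.mul_self_sqrt (by norm_num)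
  have hscpos : 0 < Real.sqrt c := Real.sqrt_pos.mpr h2
  have hsc : Real.sqrt c * Real.sqrt c = c := Real.mul_self_sqrt h2.le
  have haa : a = Real.sqrt 2 / Real.sqrt c := Real.sqrt_div (by norm_num) c
  have hs2ne : Real.sqrt 2 ≠ 0 := by positivity
  have key := stmt15_val (Real.sqrt 2) (Real.sqrt c) hs2 hs2ne hscpos.ne'
  rw [hsc] at key
  rw [haa]
  exact key
end
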